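/- Let G be an undirected graph with nonnegative edge weights, s,t ∈ V connected, and let B be the set of bridges separating s from t. Then the minimum over all pairs of s-t paths (p,b) of Σ_{e ∈ p ∩ b} w(e) equals Σ_{e ∈ B} w(e), and this minimum is attained by a pair of paths whose common edges are exactly B. -/
import Mathlib


open scoped Classical

namespace StmtAux
open SimpleGraph
variable {V : Type*}

lemma reach_closed {G : SimpleGraph V} {C : Set V}
    (hC : ∀ a b, G.Adj a b → a ∈ C → b ∈ C) {v₁ v₂ : V} (w : G.Walk v₁ v₂)
    (hs : v₁ ∈ C) : v₂ ∈ C := by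
  induction w with
  | nil => exact hs
  | cons h p ih => exact ih (hC _ _ h hs)

lemma reach_step {G' G'' : SimpleGraph V} {s z : V} (h : G'.Reachable s z)
    (hstep : ∀ a b, G'.Adj a b → G''.Reachable s a → G''.Reachable s b) :
    G''.Reachable s z := by
  obtain ⟨w⟩ := h
  exact reach_closed (C := {v | G''.Reachable s v}) hstep w (Reachable.refl s)

lemma reach_del_of_walk {G : SimpleGraph V} {X : Set (Sym2 V)} {a b : V} (w : G.Walk a b)
    (hw : ∀ e ∈ w.edges, e ∉ X) : (G.deleteEdges X).Reachable a b :=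
  ⟨w.toDeleteEdges X hw⟩

lemma exists_last_edge {G : SimpleGraph V} {s x : V} (hsx : s ≠ x) (h : G.Reachable s x) :
    ∃ (u : V) (_ : G.Adj u x) (pu : G.Walk s u), s(u, x) ∉ pu.edges := by
  obtain ⟨q⟩ := h.symm
  have hpath := q.bypass_isPath
  obtain ⟨p, hpath⟩ : ∃ p : G.Walk x s, p.IsPath := ⟨q.bypass, hpath⟩
  cases p with
  | nil => exact absurd rfl hsx.symm
  | cons hadj q' =>
    rename_i u
    rw [Walk.cons_isPath_iff] at hpath
    refine ⟨u, hadj.symm, q'.reverse, ?_⟩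
    intro he
    rw [Walk.edges_reverse, List.mem_reverse] at he
    exact hpath.2 (q'.snd_mem_support_of_mem_edges he)

lemma ncard_lt {G : SimpleGraph V} [Fintype V] {e : Sym2 V} (he : e ∈ G.edgeSet) :
    (G.deleteEdges {e}).edgeSet.ncard < G.edgeSet.ncard := by
  rw [edgeSet_deleteEdges]
  exact Set.ncard_diff_singleton_lt_of_mem he (Set.toFinite _)

def up {G : SimpleGraph V} {X : Set (Sym2 V)} {a b : V} (w : (G.deleteEdges X).Walk a b) :
    G.Walk a b :=
  w.transfer G (fun f hf => by
    have := w.edges_subset_edgeSet hf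
    rw [edgeSet_deleteEdges] at this
    exact this.1)

@[simp] lemma up_edges {G : SimpleGraph V} {X : Set (Sym2 V)} {a b : V}
    (w : (G.deleteEdges X).Walk a b) : (up w).edges = w.edges :=
  Walk.edges_transfer _ _

def upLe {G H : SimpleGraph V} (hle : H ≤ G) {a b : V} (w : H.Walk a b) : G.Walk a b :=
  w.transfer G (fun f hf => edgeSet_mono hle (w.edges_subset_edgeSet hf))

@[simp] lemma upLe_edges {G H : SimpleGraph V} (hle : H ≤ G) {a b : V} (w : H.Walk a b) :
    (upLe hle w).edges = w.edges :=
  Walk.edges_transfer _ _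

lemma reach_of_mem_support {G : SimpleGraph V} {a b c : V} (w : G.Walk a b)
    (h : c ∈ w.support) : G.Reachable a c := by
  induction w with
  | nil => simp at h; exact h ▸ Reachable.refl _
  | cons hadj p ih =>
    rw [Walk.support_cons, List.mem_cons] at h
    rcases h with h | h
    · exact h ▸ Reachable.refl _
    · exact hadj.reachable.trans (ih h)

lemma disjoint_edges_of_comp {G : SimpleGraph V} {s u d y : V}
    (w1 : G.Walk s u) (w2 : G.Walk d y) (hdisj : ¬ G.Reachable s d) :
    ∀ f ∈ w1.edges, f ∉ w2.edges := by
  intro f h1 h2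
  induction f with
  | _ a b =>
    have r1 : G.Reachable s a := reach_of_mem_support w1 (w1.fst_mem_support_of_mem_edges h1)
    have r2 : G.Reachable d a := reach_of_mem_support w2 (w2.fst_mem_support_of_mem_edges h2)
    exact hdisj (r1.trans r2.symm)

lemma fan [Fintype V] : ∀ (n : ℕ) (G : SimpleGraph V), G.edgeSet.ncard ≤ n → ∀ s x y : V,
    G.Reachable s x → G.Reachable s y →
    (∀ g : Sym2 V, (G.deleteEdges {g}).Reachable s x ∨ (G.deleteEdges {g}).Reachable s y) →
    ∃ (wx : G.Walk s x) (wy : G.Walk s y), ∀ e ∈ wx.edges, e ∉ wy.edges := by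
  intro n
  induction n with
  | zero =>
    intro G hn s x y hx hy _
    by_cases hsx : s = x
    · subst hsx; exact ⟨Walk.nil, hy.some, by simp⟩
    · exfalso
      obtain ⟨u, hadj, _, _⟩ := exists_last_edge hsx hx
      have : (s(u,x)) ∈ G.edgeSet := hadj
      have hpos : 0 < G.edgeSet.ncard := (Set.ncard_pos (Set.toFinite _)).mpr ⟨_, this⟩
      omega
  | succ n ih =>
    intro G hn s x y hx hy hcut
    by_cases hsx : s = x
    · subst hsx; exact ⟨Walk.nil, hy.some, by simp⟩
    obtain ⟨u, hadj, pu, hpu⟩ := exists_last_edge hsx hx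
    set e : Sym2 V := s(u,x) with he_def
    set G1 := G.deleteEdges {e} with hG1
    have hn1 : G1.edgeSet.ncard ≤ n := by
      have := ncard_lt (G := G) (e := e) hadj
      rw [← hG1] at this
      omega
    have hsu : G1.Reachable s u :=
      reach_del_of_walk pu (fun f hf hfe => hpu (Set.mem_singleton_iff.mp hfe ▸ hf))
    have hes : e ∉ G1.edgeSet := by
      rw [hG1, edgeSet_deleteEdges]; exact fun h => h.2 rfl
    by_cases hrec : G1.Reachable s x ∧ G1.Reachable s y ∧
        ∀ g : Sym2 V, (G1.deleteEdges {g}).Reachable s x ∨ (G1.deleteEdges {g}).Reachable s y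
    · obtain ⟨wx, wy, hd⟩ := ih G1 hn1 s x y hrec.1 hrec.2.1 hrec.2.2
      exact ⟨up wx, up wy, by simpa using hd⟩
    -- helper le facts
    have hle1 : G1 ≤ G := by rw [hG1]; exact deleteEdges_le _
    by_cases hxx : G1.Reachable s x
    · by_cases hyy : G1.Reachable s y
      · -- case (c): two-edge cut {e,h}
        have hex : ∃ h : Sym2 V, ¬ (G1.deleteEdges {h}).Reachable s x ∧
            ¬ (G1.deleteEdges {h}).Reachable s y := by
          by_contra hc
          push_neg at hc
          refine hrec ⟨hxx, hyy, fun g => ?_⟩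
          by_cases hgx : (G1.deleteEdges {g}).Reachable s x
          · exact Or.inl hgx
          · exact Or.inr (hc g hgx)
        obtain ⟨h, hhx, hhy⟩ := hex
        set G2 := G1.deleteEdges {h} with hG2
        have hle2 : G2 ≤ G := by
          rw [hG2]; exact (deleteEdges_le _).trans hle1
        have hmem : h ∈ G1.edgeSet := by
          by_contra hmem
          exact hhx (reach_del_of_walk hxx.some (fun f hf hfe =>
            hmem ((Set.mem_singleton_iff.mp hfe) ▸ (Walk.edges_subset_edgeSet _ hf))))
        have hne : h ≠ e := fun hfeq => hes (hfeq ▸ hmem)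
        have hmemG : h ∈ G.edgeSet := by
          have := hmem
          rw [hG1, edgeSet_deleteEdges] at this
          exact this.1
        have heG2 : e ∉ G2.edgeSet := by
          intro hc
          rw [hG2, edgeSet_deleteEdges] at hc
          exact hes hc.1
        have hhG2 : h ∉ G2.edgeSet := by
          intro hc
          rw [hG2, edgeSet_deleteEdges] at hc
          exact hc.2 rfl
        obtain ⟨c, d, hcd⟩ : ∃ c d, h = s(c,d) := by
          induction h using Sym2.ind with
          | _ c d => exact ⟨c, d, rfl⟩
        have hadjcd : G.Adj c d := by rw [hcd] at hmemG; exact hmemG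
        have huS : G2.Reachable s u := by
          by_contra huS
          have hstep : ∀ a b, (G.deleteEdges {h}).Adj a b →
              G2.Reachable s a → G2.Reachable s b := by
            intro a b hab ha
            simp only [deleteEdges_adj, Set.mem_singleton_iff] at hab
            by_cases h2 : s(a,b) = e
            · rcases Sym2.eq_iff.mp h2 with ⟨ha1, hb1⟩ | ⟨ha1, hb1⟩
              · rw [ha1] at ha; exact absurd ha huS
              · rw [ha1] at ha; exact absurd ha hhx
            · refine ha.trans (Adj.reachable ?_)
              simp only [hG2, hG1, deleteEdges_deleteEdges, deleteEdges_adj, Set.mem_union,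
                Set.mem_singleton_iff]
              exact ⟨hab.1, by tauto⟩
          rcases hcut h with hr | hr
          · exact hhx (reach_step hr hstep)
          · exact hhy (reach_step hr hstep)
        have hone : ∃ c' d', s(c',d') = h ∧ G.Adj c' d' ∧
            G2.Reachable s c' ∧ ¬ G2.Reachable s d' := by
          by_cases hcS : G2.Reachable s c <;> by_cases hdS : G2.Reachable s d
          · exfalso
            apply hhx
            refine reach_step hxx ?_
            intro a b hab ha
            by_cases h2 : s(a,b) = h
            · rcases Sym2.eq_iff.mp (h2.trans hcd) with ⟨ha1, hb1⟩ | ⟨ha1, hb1⟩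
              · rw [hb1]; exact hdS
              · rw [hb1]; exact hcS
            · exact ha.trans (Adj.reachable (by
                rw [hG2]; exact deleteEdges_adj.mpr ⟨hab, by simpa using h2⟩))
          · exact ⟨c, d, hcd.symm, hadjcd, hcS, hdS⟩
          · refine ⟨d, c, ?_, hadjcd.symm, hdS, hcS⟩
            rw [Sym2.eq_swap]; exact hcd.symm
          · exfalso
            apply hhx
            refine reach_step hxx ?_
            intro a b hab ha
            by_cases h2 : s(a,b) = h
            · rcases Sym2.eq_iff.mp (h2.trans hcd) with ⟨ha1, hb1⟩ | ⟨ha1, hb1⟩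
              · rw [ha1] at ha; exact absurd ha hcS
              · rw [ha1] at ha; exact absurd ha hdS
            · exact ha.trans (Adj.reachable (by
                rw [hG2]; exact deleteEdges_adj.mpr ⟨hab, by simpa using h2⟩))
        obtain ⟨c', d', hcd', hadj', hcS', hdS'⟩ := hone
        have hRd : G2.Reachable d' y := by
          by_contra hRd
          have hCstep : ∀ a b, G1.Adj a b →
              a ∈ {v | G2.Reachable s v ∨ G2.Reachable d' v} →
              b ∈ {v | G2.Reachable s v ∨ G2.Reachable d' v} := by
            intro a b hab ha
            by_cases h3 : s(a,b) = h
            · rcases Sym2.eq_iff.mp (h3.trans hcd'.symm) with ⟨ha1, hb1⟩ | ⟨ha1, hb1⟩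
              · have : d' ∈ {v | G2.Reachable s v ∨ G2.Reachable d' v} :=
                  Or.inr (Reachable.refl d')
                rw [hb1]; exact this
              · rw [hb1]; exact Or.inl hcS'
            · have hadj2 : G2.Adj a b := by
                rw [hG2]; exact deleteEdges_adj.mpr ⟨hab, by simpa using h3⟩
              rcases ha with ha | ha
              · exact Or.inl (ha.trans hadj2.reachable)
              · exact Or.inr (ha.trans hadj2.reachable)
          by_cases hdx : G2.Reachable d' x
          · obtain ⟨w⟩ := hy
            have hyC : y ∈ {v | G2.Reachable s v ∨ G2.Reachable d' v} := by
              refine reach_closed ?_ w (Or.inl (Reachable.refl s))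
              intro a b hab ha
              by_cases h2 : s(a,b) = e
              · rcases Sym2.eq_iff.mp h2 with ⟨ha1, hb1⟩ | ⟨ha1, hb1⟩
                · rw [hb1]; exact Or.inr hdx
                · rw [hb1]; exact Or.inl huS
              · have hadj1 : G1.Adj a b := by
                  rw [hG1]; exact deleteEdges_adj.mpr ⟨hab, by simpa using h2⟩
                exact hCstep a b hadj1 ha
            rcases hyC with h' | h'
            · exact hhy h'
            · exact hRd h'
          · rcases hcut e with hr | hr
            · obtain ⟨w⟩ := hr
              have hxC : x ∈ {v | G2.Reachable s v ∨ G2.Reachable d' v} :=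
                reach_closed hCstep w (Or.inl (Reachable.refl s))
              rcases hxC with h' | h'
              · exact hhx h'
              · exact hdx h'
            · obtain ⟨w⟩ := hr
              have hyC : y ∈ {v | G2.Reachable s v ∨ G2.Reachable d' v} :=
                reach_closed hCstep w (Or.inl (Reachable.refl s))
              rcases hyC with h' | h'
              · exact hhy h'
              · exact hRd h'
        have hn2 : G2.edgeSet.ncard ≤ n := by
          have := ncard_lt (G := G1) hmem
          rw [← hG2] at this
          omega
        have hcut2 : ∀ g : Sym2 V,
            (G2.deleteEdges {g}).Reachable s u ∨ (G2.deleteEdges {g}).Reachable s c' := by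
          intro g
          by_contra hg
          push_neg at hg
          obtain ⟨hgu, hgc⟩ := hg
          have hstep : ∀ a b, (G.deleteEdges {g}).Adj a b →
              (G2.deleteEdges {g}).Reachable s a → (G2.deleteEdges {g}).Reachable s b := by
            intro a b hab ha
            simp only [deleteEdges_adj, Set.mem_singleton_iff] at hab
            by_cases h2 : s(a,b) = e
            · rcases Sym2.eq_iff.mp h2 with ⟨ha1, hb1⟩ | ⟨ha1, hb1⟩
              · rw [ha1] at ha; exact absurd ha hgu
              · rw [ha1] at ha
                exact absurd (ha.mono (deleteEdges_le _)) hhx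
            · by_cases h3 : s(a,b) = h
              · rcases Sym2.eq_iff.mp (h3.trans hcd'.symm) with ⟨ha1, hb1⟩ | ⟨ha1, hb1⟩
                · rw [ha1] at ha; exact absurd ha hgc
                · rw [ha1] at ha
                  exact absurd (ha.mono (deleteEdges_le _)) hdS'
              · refine ha.trans (Adj.reachable ?_)
                simp only [hG2, hG1, deleteEdges_deleteEdges, deleteEdges_adj, Set.mem_union,
                  Set.mem_singleton_iff]
                exact ⟨hab.1, by tauto⟩
          rcases hcut g with hr | hr
          · exact hhx ((reach_step hr hstep).mono (deleteEdges_le _))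
          · exact hhy ((reach_step hr hstep).mono (deleteEdges_le _))
        obtain ⟨wu, wc, hd⟩ := ih G2 hn2 s u c' huS hcS' hcut2
        obtain ⟨wdy⟩ := hRd
        refine ⟨(upLe hle2 wu).concat hadj, (upLe hle2 wc).append (Walk.cons hadj' (upLe hle2 wdy)), ?_⟩
        intro f hf hmem
        rw [Walk.edges_concat] at hf
        rw [List.concat_eq_append, List.mem_append, upLe_edges] at hf
        rw [Walk.edges_append, Walk.edges_cons, List.mem_append, List.mem_cons,
          upLe_edges, upLe_edges] at hmem
        rcases hf with hf | hf
        · rcases hmem with hm | hm | hm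
          · exact hd f hf hm
          · have hfe : f ∈ G2.edgeSet := wu.edges_subset_edgeSet hf
            rw [hm, hcd'] at hfe
            exact hhG2 hfe
          · exact disjoint_edges_of_comp wu wdy hdS' f hf hm
        · simp only [List.mem_singleton] at hf
          subst hf
          rcases hmem with hm | hm | hm
          · exact heG2 (wc.edges_subset_edgeSet hm)
          · exact hne (hm.trans hcd').symm
          · exact heG2 (wdy.edges_subset_edgeSet hm)
      · -- case (b)
        have hu' : ¬ G1.Reachable s u := by
          intro hsu'
          apply hyy
          refine reach_step hy ?_
          intro a b hab ha
          by_cases h2 : s(a,b) = e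
          · rcases Sym2.eq_iff.mp h2 with ⟨ha1, hb1⟩ | ⟨ha1, hb1⟩
            · rw [hb1]; exact hxx
            · rw [hb1]; exact hsu'
          · exact ha.trans (Adj.reachable (by
              rw [hG1]; exact deleteEdges_adj.mpr ⟨hab, by simpa using h2⟩))
        have huy : G1.Reachable u y := by
          obtain ⟨w⟩ := hy
          have hyC : y ∈ {v | G1.Reachable s v ∨ G1.Reachable u v} := by
            refine reach_closed ?_ w (Or.inl (Reachable.refl s))
            intro a b hab ha
            by_cases h2 : s(a,b) = e
            · rcases Sym2.eq_iff.mp h2 with ⟨ha1, hb1⟩ | ⟨ha1, hb1⟩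
              · rw [hb1]; exact Or.inl hxx
              · have : u ∈ {v | G1.Reachable s v ∨ G1.Reachable u v} :=
                  Or.inr (Reachable.refl u)
                rw [hb1]; exact this
            · have hadj1 : G1.Adj a b := by
                rw [hG1]; exact deleteEdges_adj.mpr ⟨hab, by simpa using h2⟩
              rcases ha with ha | ha
              · exact Or.inl (ha.trans hadj1.reachable)
              · exact Or.inr (ha.trans hadj1.reachable)
          rcases hyC with h' | h'
          · exact absurd h' hyy
          · exact h'
        have hcut'' : ∀ g : Sym2 V, (G1.deleteEdges {g}).Reachable s x := by
          intro g
          by_contra hgx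
          have hstep : ∀ a b, (G.deleteEdges {g}).Adj a b →
              (G1.deleteEdges {g}).Reachable s a → (G1.deleteEdges {g}).Reachable s b := by
            intro a b hab ha
            simp only [deleteEdges_adj, Set.mem_singleton_iff] at hab
            by_cases h2 : s(a,b) = e
            · rcases Sym2.eq_iff.mp h2 with ⟨ha1, hb1⟩ | ⟨ha1, hb1⟩
              · rw [ha1] at ha
                exact absurd (ha.mono (deleteEdges_le _)) hu'
              · rw [ha1] at ha; exact absurd ha hgx
            · refine ha.trans (Adj.reachable ?_)
              simp only [hG1, deleteEdges_deleteEdges, deleteEdges_adj, Set.mem_union,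
                Set.mem_singleton_iff]
              exact ⟨hab.1, by tauto⟩
          rcases hcut g with hr | hr
          · exact hgx (reach_step hr hstep)
          · exact hyy ((reach_step hr hstep).mono (deleteEdges_le _))
        obtain ⟨w1, w2, hd⟩ := ih G1 hn1 s x x hxx hxx (fun g => Or.inl (hcut'' g))
        obtain ⟨wuy⟩ := huy
        refine ⟨up w1, (up w2).append (Walk.cons hadj.symm (up wuy)), ?_⟩
        intro f hf hmem
        rw [up_edges] at hf
        rw [Walk.edges_append, Walk.edges_cons, List.mem_append, List.mem_cons,
          up_edges, up_edges] at hmem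
        rcases hmem with hmem | hmem | hmem
        · exact hd f hf hmem
        · have hfe : f ∈ G1.edgeSet := w1.edges_subset_edgeSet hf
          rw [hmem] at hfe
          rw [Sym2.eq_swap] at hfe
          exact hes hfe
        · exact disjoint_edges_of_comp w1 wuy hu' f hf hmem
    · -- case (a)
      have hy1 : G1.Reachable s y := (hcut e).resolve_left hxx
      have hcut' : ∀ g : Sym2 V,
          (G1.deleteEdges {g}).Reachable s u ∨ (G1.deleteEdges {g}).Reachable s y := by
        intro g
        by_contra hg
        push_neg at hg
        obtain ⟨hgu, hgy⟩ := hg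
        have hstep : ∀ a b, (G.deleteEdges {g}).Adj a b →
            (G1.deleteEdges {g}).Reachable s a → (G1.deleteEdges {g}).Reachable s b := by
          intro a b hab ha
          simp only [deleteEdges_adj, Set.mem_singleton_iff] at hab
          by_cases h2 : s(a,b) = e
          · rcases Sym2.eq_iff.mp h2 with ⟨rfl, rfl⟩ | ⟨rfl, rfl⟩
            · exact absurd ha hgu
            · exact absurd (ha.mono (deleteEdges_le _)) hxx
          · refine ha.trans (Adj.reachable ?_)
            simp only [hG1, deleteEdges_deleteEdges, deleteEdges_adj, Set.mem_union,
              Set.mem_singleton_iff]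
            exact ⟨hab.1, by tauto⟩
        rcases hcut g with hr | hr
        · exact hxx ((reach_step hr hstep).mono (deleteEdges_le _))
        · exact hgy (reach_step hr hstep)
      obtain ⟨wu, wy, hd⟩ := ih G1 hn1 s u y hsu hy1 hcut'
      refine ⟨(up wu).concat hadj, up wy, ?_⟩
      intro f hf
      rw [Walk.edges_concat] at hf; rw [List.concat_eq_append, List.mem_append] at hf
      rcases hf with hf | hf
      · rw [up_edges] at hf
        simpa using hd f hf
      · simp only [List.mem_singleton] at hf
        subst hf
        rw [up_edges]
        intro hmem
        exact hes (wy.edges_subset_edgeSet hmem)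


lemma reach_del_of_walk' {G : SimpleGraph V} {e : Sym2 V} {a b : V} (w : G.Walk a b)
    (hw : e ∉ w.edges) : (G.deleteEdges {e}).Reachable a b :=
  reach_del_of_walk w (fun f hf hfe => hw ((Set.mem_singleton_iff.mp hfe) ▸ hf))

lemma bridge_mem_edges {G : SimpleGraph V} {s t : V} {e : Sym2 V}
    (hbe : ¬ (G.deleteEdges {e}).Reachable s t) (w : G.Walk s t) : e ∈ w.edges := by
  by_contra hne
  exact hbe (reach_del_of_walk' w hne)

lemma mem_edgeSet_of_bridge {G : SimpleGraph V} {s t : V} {e : Sym2 V}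
    (h : G.Reachable s t) (hbe : ¬ (G.deleteEdges {e}).Reachable s t) : e ∈ G.edgeSet :=
  Walk.edges_subset_edgeSet _ (bridge_mem_edges hbe h.some)

lemma core [Fintype V] : ∀ (n : ℕ) (G : SimpleGraph V), G.edgeSet.ncard ≤ n → ∀ s t : V,
    G.Reachable s t → ∃ (p b : G.Walk s t), ∀ f, f ∈ p.edges → f ∈ b.edges →
      ¬ (G.deleteEdges {f}).Reachable s t := by
  intro n
  induction n with
  | zero =>
    intro G hn s t h
    by_cases hbr : ∀ g : Sym2 V, (G.deleteEdges {g}).Reachable s t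
    · obtain ⟨wx, wy, hd⟩ := fan 0 G hn s t t h h (fun g => Or.inl (hbr g))
      exact ⟨wx, wy, fun f h1 h2 => absurd h2 (hd f h1)⟩
    · exfalso
      push_neg at hbr
      obtain ⟨g, hg⟩ := hbr
      have hmem : g ∈ G.edgeSet := mem_edgeSet_of_bridge h hg
      have : 0 < G.edgeSet.ncard := (Set.ncard_pos (Set.toFinite _)).mpr ⟨_, hmem⟩
      omega
  | succ n ih =>
    intro G hn s t h
    by_cases hbr : ∀ g : Sym2 V, (G.deleteEdges {g}).Reachable s t
    · obtain ⟨wx, wy, hd⟩ := fan (n+1) G hn s t t h h (fun g => Or.inl (hbr g))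
      exact ⟨wx, wy, fun f h1 h2 => absurd h2 (hd f h1)⟩
    push_neg at hbr
    obtain ⟨e, hbe⟩ := hbr
    have hmemG : e ∈ G.edgeSet := mem_edgeSet_of_bridge h hbe
    set G1 := G.deleteEdges {e} with hG1
    have hle1 : G1 ≤ G := by rw [hG1]; exact deleteEdges_le _
    have hes : e ∉ G1.edgeSet := by
      rw [hG1, edgeSet_deleteEdges]; exact fun hc => hc.2 rfl
    have hn1 : G1.edgeSet.ncard ≤ n := by
      have := ncard_lt (G := G) hmemG
      rw [← hG1] at this
      omega
    obtain ⟨u, v, huv⟩ : ∃ u v, e = s(u,v) := by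
      induction e using Sym2.ind with
      | _ u v => exact ⟨u, v, rfl⟩
    have hadjuv : G.Adj u v := by rw [huv] at hmemG; exact hmemG
    -- exactly one endpoint of e reachable from s in G1
    have hone : ∃ u' v', s(u',v') = e ∧ G.Adj u' v' ∧
        G1.Reachable s u' ∧ ¬ G1.Reachable s v' := by
      by_cases huS : G1.Reachable s u <;> by_cases hvS : G1.Reachable s v
      · exfalso
        apply hbe
        refine reach_step h ?_
        intro a b hab ha
        by_cases h2 : s(a,b) = e
        · rcases Sym2.eq_iff.mp (h2.trans huv) with ⟨ha1, hb1⟩ | ⟨ha1, hb1⟩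
          · rw [hb1]; exact hvS
          · rw [hb1]; exact huS
        · exact ha.trans (Adj.reachable (by
            rw [hG1]; exact deleteEdges_adj.mpr ⟨hab, by simpa using h2⟩))
      · exact ⟨u, v, huv.symm, hadjuv, huS, hvS⟩
      · refine ⟨v, u, ?_, hadjuv.symm, hvS, huS⟩
        rw [Sym2.eq_swap]; exact huv.symm
      · exfalso
        apply hbe
        refine reach_step h ?_
        intro a b hab ha
        by_cases h2 : s(a,b) = e
        · rcases Sym2.eq_iff.mp (h2.trans huv) with ⟨ha1, hb1⟩ | ⟨ha1, hb1⟩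
          · rw [ha1] at ha; exact absurd ha huS
          · rw [ha1] at ha; exact absurd ha hvS
        · exact ha.trans (Adj.reachable (by
            rw [hG1]; exact deleteEdges_adj.mpr ⟨hab, by simpa using h2⟩))
    obtain ⟨u', v', heq, hadj', huS', hvS'⟩ := hone
    -- v' reaches t in G1
    have hvt : G1.Reachable v' t := by
      obtain ⟨w⟩ := h
      have htC : t ∈ {z | G1.Reachable s z ∨ G1.Reachable v' z} := by
        refine reach_closed ?_ w (Or.inl (Reachable.refl s))
        intro a b hab ha
        by_cases h2 : s(a,b) = e
        · rcases Sym2.eq_iff.mp (h2.trans heq.symm) with ⟨ha1, hb1⟩ | ⟨ha1, hb1⟩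
          · have : v' ∈ {z | G1.Reachable s z ∨ G1.Reachable v' z} :=
              Or.inr (Reachable.refl v')
            rw [hb1]; exact this
          · rw [hb1]; exact Or.inl huS'
        · have hadj1 : G1.Adj a b := by
            rw [hG1]; exact deleteEdges_adj.mpr ⟨hab, by simpa using h2⟩
          rcases ha with ha | ha
          · exact Or.inl (ha.trans hadj1.reachable)
          · exact Or.inr (ha.trans hadj1.reachable)
      rcases htC with h' | h'
      · exact absurd h' hbe
      · exact h'
    obtain ⟨p₁, b₁, hprop₁⟩ := ih G1 hn1 s u' huS'
    obtain ⟨p₂, b₂, hprop₂⟩ := ih G1 hn1 v' t hvt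
    refine ⟨(up p₁).append (Walk.cons hadj' (up p₂)),
            (up b₁).append (Walk.cons hadj' (up b₂)), ?_⟩
    intro f hfp hfb
    rw [Walk.edges_append, Walk.edges_cons, List.mem_append, List.mem_cons,
      up_edges, up_edges] at hfp hfb
    have hcross1 : f ∈ p₁.edges → f ∈ b₂.edges → False := fun h1 h2 =>
      disjoint_edges_of_comp p₁ b₂ hvS' f h1 h2
    have hcross2 : f ∈ b₁.edges → f ∈ p₂.edges → False := fun h1 h2 =>
      disjoint_edges_of_comp b₁ p₂ hvS' f h1 h2
    have hnotE : ∀ {w : G1.Walk s u'}, f ∈ w.edges → f ≠ s(u',v') := by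
      intro w hw hfe
      apply hes
      have := w.edges_subset_edgeSet hw
      rw [hfe, heq] at this
      exact this
    have hnotE2 : ∀ {w : G1.Walk v' t}, f ∈ w.edges → f ≠ s(u',v') := by
      intro w hw hfe
      apply hes
      have := w.edges_subset_edgeSet hw
      rw [hfe, heq] at this
      exact this
    rcases hfp with hfp | hfp | hfp
    · rcases hfb with hfb | hfb | hfb
      · -- f ∈ p₁ ∩ b₁ : bridge of (s,u') in G1
        have hf1 := hprop₁ f hfp hfb
        intro hr
        apply hbe
        have hstep : ∀ a b, (G.deleteEdges {f}).Adj a b →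
            (G1.deleteEdges {f}).Reachable s a → (G1.deleteEdges {f}).Reachable s b := by
          intro a b hab ha
          simp only [deleteEdges_adj, Set.mem_singleton_iff] at hab
          by_cases h2 : s(a,b) = e
          · rcases Sym2.eq_iff.mp (h2.trans heq.symm) with ⟨ha1, hb1⟩ | ⟨ha1, hb1⟩
            · rw [ha1] at ha; exact absurd ha hf1
            · rw [ha1] at ha
              exact absurd (ha.mono (deleteEdges_le _)) hvS'
          · refine ha.trans (Adj.reachable ?_)
            simp only [hG1, deleteEdges_deleteEdges, deleteEdges_adj, Set.mem_union,
              Set.mem_singleton_iff]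
            exact ⟨hab.1, by tauto⟩
        exact (reach_step hr hstep).mono (deleteEdges_le _)
      · exact absurd hfb (hnotE hfp)
      · exact absurd (hcross1 hfp hfb) not_false
    · -- f = e
      subst hfp
      rw [heq]
      exact hbe
    · rcases hfb with hfb | hfb | hfb
      · exact absurd (hcross2 hfb hfp) not_false
      · exact absurd hfb (hnotE2 hfp)
      · -- f ∈ p₂ ∩ b₂ : bridge of (v',t) in G1
        have hf2 := hprop₂ f hfp hfb
        intro hr
        apply hbe
        have hstep : ∀ a b, (G.deleteEdges {f}).Adj a b →
            (G1.deleteEdges {f}).Reachable t a → (G1.deleteEdges {f}).Reachable t b := by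
          intro a b hab ha
          simp only [deleteEdges_adj, Set.mem_singleton_iff] at hab
          by_cases h2 : s(a,b) = e
          · rcases Sym2.eq_iff.mp (h2.trans heq.symm) with ⟨ha1, hb1⟩ | ⟨ha1, hb1⟩
            · rw [ha1] at ha
              exact absurd (huS'.trans (ha.mono (deleteEdges_le _)).symm) hbe
            · rw [ha1] at ha
              exact absurd (ha.symm) (fun hc => hf2 hc)
          · refine ha.trans (Adj.reachable ?_)
            simp only [hG1, deleteEdges_deleteEdges, deleteEdges_adj, Set.mem_union,
              Set.mem_singleton_iff]
            exact ⟨hab.1, by tauto⟩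
        exact ((reach_step hr.symm hstep).mono (deleteEdges_le _)).symm

end StmtAux

/-- Tunable-survivability characterization: in a graph with nonnegative edge
weights and `s`, `t` connected, the minimum over all pairs `(p, b)` of `s`-`t`
paths of the total weight of their common edges equals the total weight of the
bridges separating `s` from `t`, and the minimum is attained by a pair of paths
whose common edges are exactly the bridges. -/
theorem stmt_16 {V : Type*} [Fintype V] (G : SimpleGraph V)
    (w : Sym2 V → ℝ) (hw : ∀ e, 0 ≤ w e)
    {s t : V} (h : G.Reachable s t) :
    IsLeast {x : ℝ | ∃ p b : G.Walk s t, p.IsPath ∧ b.IsPath ∧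
        x = ∑ e ∈ p.edges.toFinset ∩ b.edges.toFinset, w e}
      (∑ e ∈ Finset.univ.filter
        (fun e => e ∈ G.edgeSet ∧ ¬ (G.deleteEdges {e}).Reachable s t), w e)
    ∧ ∃ p b : G.Walk s t, p.IsPath ∧ b.IsPath ∧
        p.edges.toFinset ∩ b.edges.toFinset
          = Finset.univ.filter
              (fun e => e ∈ G.edgeSet ∧ ¬ (G.deleteEdges {e}).Reachable s t) := by
  set B := Finset.univ.filter
    (fun e => e ∈ G.edgeSet ∧ ¬ (G.deleteEdges {e}).Reachable s t) with hB
  obtain ⟨p₀, b₀, hcore⟩ := StmtAux.core G.edgeSet.ncard G le_rfl s t h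
  have hp : p₀.bypass.IsPath := p₀.bypass_isPath
  have hb : b₀.bypass.IsPath := b₀.bypass_isPath
  have hBsub : ∀ (q : SimpleGraph.Walk G s t), ∀ f ∈ B, f ∈ q.edges := by
    intro q f hf
    rw [hB, Finset.mem_filter] at hf
    exact StmtAux.bridge_mem_edges hf.2.2 q
  have hinter : p₀.bypass.edges.toFinset ∩ b₀.bypass.edges.toFinset = B := by
    ext f
    simp only [Finset.mem_inter, List.mem_toFinset]
    constructor
    · rintro ⟨h1, h2⟩
      have h1' := p₀.edges_bypass_subset h1
      have h2' := b₀.edges_bypass_subset h2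
      rw [hB, Finset.mem_filter]
      exact ⟨Finset.mem_univ _,
        SimpleGraph.Walk.edges_subset_edgeSet _ h1', hcore f h1' h2'⟩
    · intro hf
      exact ⟨hBsub _ f hf, hBsub _ f hf⟩
  refine ⟨⟨⟨p₀.bypass, b₀.bypass, hp, hb, by rw [hinter]⟩, ?_⟩,
    ⟨p₀.bypass, b₀.bypass, hp, hb, hinter⟩⟩
  rintro x ⟨p', b', hp', hb', rfl⟩
  apply Finset.sum_le_sum_of_subset_of_nonneg
  · intro f hf
    rw [Finset.mem_inter]
    exact ⟨List.mem_toFinset.mpr (hBsub p' f hf), List.mem_toFinset.mpr (hBsub b' f hf)⟩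
  · intro i _ _
    exact hw i
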